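/- A function f : {t, f, b, n}ⁿ → {t, f, b, n} is a matrix function of the matrix M^{BD,→,⊥} (i.e., is obtainable by composition from projections and the truth functions of ¬, ∧, ∨, →, ⊥) if and only if f maps {t, f, b}ⁿ into {t, f, b} and maps {t, f, n}ⁿ into {t, f, n}. Equivalently, an n-ary connective ◊ with intended interpretation ◊̂ is definable in BD^{→,⊥,◊} iff ◊̂ preserves both {t, f, b} and {t, f, n}. -/

import Mathlib

namespace BD12

/-- The four truth values of Belnap-Dunn logic:
`t` (true), `f` (false), `b` (both true and false), `n` (neither true nor false). -/
inductive V4 : Type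
  | t | f | b | n
deriving DecidableEq, Repr

namespace V4

/-- `a` lies above truth in the Belnap-Dunn bilattice (i.e. `a ∈ {t, b}`). -/
def hasT : V4 → Bool
  | t => true
  | b => true
  | _ => false

/-- `a` lies above falsity in the Belnap-Dunn bilattice (i.e. `a ∈ {f, b}`). -/
def hasF : V4 → Bool
  | f => true
  | b => true
  | _ => false

def ofTF : Bool → Bool → V4
  | true, true => b
  | true, false => t
  | false, true => f
  | false, false => n

/-- Interpretation of ¬: swaps `t` and `f`, fixes `b` and `n`. -/
def neg4 : V4 → V4
  | t => f
  | f => t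
  | b => b
  | n => n

/-- Interpretation of ∧: greatest lower bound in the lattice order on `V4`
with `f` least, `t` greatest, `b` and `n` incomparable. -/
def and4 (x y : V4) : V4 := ofTF (x.hasT && y.hasT) (x.hasF || y.hasF)

/-- Interpretation of ∨: least upper bound in the lattice order on `V4`
with `f` least, `t` greatest, `b` and `n` incomparable. -/
def or4 (x y : V4) : V4 := ofTF (x.hasT || y.hasT) (x.hasF && y.hasF)

/-- Interpretation of →: `a₁ → a₂ = t` if `a₁ ∉ {t, b}`, and `a₂` otherwise. -/
def imp4 (x y : V4) : V4 := if x = t ∨ x = b then y else t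

/-- The designated truth values: `t` and `b`. -/
def desig (x : V4) : Prop := x = t ∨ x = b

end V4

/-- Formulas of the expansion BD^{→,⊥} of Belnap-Dunn logic,
over the connectives ¬, ∧, ∨, →, ⊥. -/
inductive Fm : Type
  | var : ℕ → Fm
  | neg : Fm → Fm
  | and : Fm → Fm → Fm
  | or : Fm → Fm → Fm
  | imp : Fm → Fm → Fm
  | bot : Fm
deriving DecidableEq

/-- The valuation in the matrix `M^{BD,→,⊥}` determined by an assignment of
truth values to the propositional variables. -/
def val (v : ℕ → V4) : Fm → V4
  | .var p => v p
  | .neg A => V4.neg4 (val v A)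
  | .and A B => V4.and4 (val v A) (val v B)
  | .or A B => V4.or4 (val v A) (val v B)
  | .imp A B => V4.imp4 (val v A) (val v B)
  | .bot => V4.f

/-- The set of propositional variables occurring in a formula. -/
def fvars : Fm → Set ℕ
  | .var p => {p}
  | .neg A => fvars A
  | .and A B => fvars A ∪ fvars B
  | .or A B => fvars A ∪ fvars B
  | .imp A B => fvars A ∪ fvars B
  | .bot => ∅

/-- The matrix functions of `M^{BD,→,⊥}`: the functions on the truth values
obtainable by composition from projections and the truth functions of
¬, ∧, ∨, →, ⊥. -/
inductive IsMF : {k : ℕ} → ((Fin k → V4) → V4) → Prop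
  | proj {k : ℕ} (i : Fin k) : IsMF (fun a => a i)
  | bot {k : ℕ} : IsMF (fun _ : Fin k → V4 => V4.f)
  | neg {k : ℕ} {g : (Fin k → V4) → V4} :
      IsMF g → IsMF (fun a => V4.neg4 (g a))
  | and {k : ℕ} {g h : (Fin k → V4) → V4} :
      IsMF g → IsMF h → IsMF (fun a => V4.and4 (g a) (h a))
  | or {k : ℕ} {g h : (Fin k → V4) → V4} :
      IsMF g → IsMF h → IsMF (fun a => V4.or4 (g a) (h a))
  | imp {k : ℕ} {g h : (Fin k → V4) → V4} :
      IsMF g → IsMF h → IsMF (fun a => V4.imp4 (g a) (h a))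

section Aux

open V4

instance : Fintype V4 := ⟨{V4.t, V4.f, V4.b, V4.n}, by intro x; cases x <;> decide⟩

/-- Closure of `IsMF` under a set closed under the operations. -/
lemma isMF_closed {k : ℕ} {g : (Fin k → V4) → V4} (h : IsMF g) (S : Set V4)
    (hf : V4.f ∈ S) (hneg : ∀ x ∈ S, V4.neg4 x ∈ S)
    (hand : ∀ x ∈ S, ∀ y ∈ S, V4.and4 x y ∈ S)
    (hor : ∀ x ∈ S, ∀ y ∈ S, V4.or4 x y ∈ S)
    (himp : ∀ x ∈ S, ∀ y ∈ S, V4.imp4 x y ∈ S) :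
    ∀ a, (∀ i, a i ∈ S) → g a ∈ S := by
  induction h with
  | proj i => exact fun a ha => ha i
  | bot => exact fun a _ => hf
  | neg _ ih => exact fun a ha => hneg _ (ih a ha)
  | and _ _ ih1 ih2 => exact fun a ha => hand _ (ih1 a ha) _ (ih2 a ha)
  | or _ _ ih1 ih2 => exact fun a ha => hor _ (ih1 a ha) _ (ih2 a ha)
  | imp _ _ ih1 ih2 => exact fun a ha => himp _ (ih1 a ha) _ (ih2 a ha)

lemma isMF_of_fm {k : ℕ} (A : Fm) :
    IsMF (fun a : Fin k → V4 => val (fun m => if h : m < k then a ⟨m, h⟩ else V4.f) A) := by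
  induction A with
  | var p =>
    by_cases h : p < k
    · simp only [val, dif_pos h]; exact IsMF.proj ⟨p, h⟩
    · simp only [val, dif_neg h]; exact IsMF.bot
  | neg A ih => simp only [val]; exact IsMF.neg ih
  | and A B ih1 ih2 => simp only [val]; exact IsMF.and ih1 ih2
  | or A B ih1 ih2 => simp only [val]; exact IsMF.or ih1 ih2
  | imp A B ih1 ih2 => simp only [val]; exact IsMF.imp ih1 ih2
  | bot => simp only [val]; exact IsMF.bot

lemma isMF_of_def {k : ℕ} {g : (Fin k → V4) → V4}
    (h : ∃ A : Fm, fvars A ⊆ {m : ℕ | m < k} ∧ ∀ v : ℕ → V4, val v A = g (fun i => v i)) :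
    IsMF g := by
  obtain ⟨A, -, hA⟩ := h
  have hg : g = fun a : Fin k → V4 =>
      val (fun m => if h : m < k then a ⟨m, h⟩ else V4.f) A := by
    funext a
    rw [hA]
    congr 1
    funext i
    simp [i.isLt]
  rw [hg]
  exact isMF_of_fm A

/-- conjunction of a list of formulas -/
def conjList : List Fm → Fm
  | [] => .imp .bot .bot
  | B :: L => .and B (conjList L)

/-- disjunction of a list of formulas -/
def disjList : List Fm → Fm
  | [] => .bot
  | B :: L => .or B (disjList L)

lemma fvars_conjList {S : Set ℕ} {L : List Fm} (h : ∀ B ∈ L, fvars B ⊆ S) :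
    fvars (conjList L) ⊆ S := by
  induction L with
  | nil => simp [conjList, fvars]
  | cons B L ih =>
    simp only [conjList, fvars, Set.union_subset_iff]
    exact ⟨h B (by simp), ih fun C hC => h C (by simp [hC])⟩

lemma fvars_disjList {S : Set ℕ} {L : List Fm} (h : ∀ B ∈ L, fvars B ⊆ S) :
    fvars (disjList L) ⊆ S := by
  induction L with
  | nil => simp [disjList, fvars]
  | cons B L ih =>
    simp only [disjList, fvars, Set.union_subset_iff]
    exact ⟨h B (by simp), ih fun C hC => h C (by simp [hC])⟩

lemma and4_t (x : V4) : V4.and4 V4.t x = x := by cases x <;> rfl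
lemma and4_f (x : V4) : V4.and4 V4.f x = V4.f := by cases x <;> rfl

lemma val_conjList (v : ℕ → V4) (L : List Fm)
    (h : ∀ B ∈ L, val v B = V4.t ∨ val v B = V4.f) :
    val v (conjList L) = if ∀ B ∈ L, val v B = V4.t then V4.t else V4.f := by
  induction L with
  | nil => simp [conjList, val, V4.imp4]
  | cons B L ih =>
    have hB := h B (by simp)
    have ih' := ih fun C hC => h C (by simp [hC])
    rcases hB with hB | hB <;> by_cases hL : ∀ C ∈ L, val v C = V4.t <;>
      simp [conjList, val, ih', hB, hL, and4_t, and4_f, List.forall_mem_cons]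

lemma val_disjList (v : ℕ → V4) (d : V4) (L : List Fm)
    (h : ∀ C ∈ L, val v C = V4.f ∨ val v C = d)
    (hex : ∃ C ∈ L, val v C = d) :
    val v (disjList L) = d := by
  induction L with
  | nil => simp at hex
  | cons B L ih =>
    have hB := h B (by simp)
    have hL : val v (disjList L) = V4.f ∨ val v (disjList L) = d := by
      clear ih hex
      induction L with
      | nil => left; rfl
      | cons C L ih2 =>
        have hC := h C (by simp)
        have h2 := ih2 (fun D hD => h D (by simp at hD ⊢; tauto))
        simp only [disjList, val]
        rcases hC with hC | hC <;> rcases h2 with h2 | h2 <;> rw [hC, h2] <;>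
          first
          | (left; cases d <;> rfl)
          | (right; cases d <;> rfl)
    simp only [disjList, val]
    rcases hex with ⟨C, hCmem, hCval⟩
    simp only [List.mem_cons] at hCmem
    rcases hCmem with rfl | hCmem
    · rw [hCval]
      rcases hL with h2 | h2 <;> rw [h2] <;> cases d <;> rfl
    · rw [ih (fun D hD => h D (by simp [hD])) ⟨C, hCmem, hCval⟩]
      rcases hB with h2 | h2 <;> rw [h2] <;> cases d <;> rfl

/-- A formula, in the single formula `B`, whose value is `t` if `B` has value `w`
and `f` otherwise. -/
def eqFm : V4 → Fm → Fm
  | .t, B => .and (.neg (.imp B .bot)) (.imp (.neg B) .bot)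
  | .f, B => .and (.imp B .bot) (.neg (.imp (.neg B) .bot))
  | .b, B => .and (.neg (.imp B .bot)) (.neg (.imp (.neg B) .bot))
  | .n, B => .and (.imp B .bot) (.imp (.neg B) .bot)

lemma val_eqFm (v : ℕ → V4) (w : V4) (B : Fm) :
    val v (eqFm w B) = if val v B = w then V4.t else V4.f := by
  cases w <;> simp only [eqFm, val] <;> generalize val v B = x <;> cases x <;> decide

lemma fvars_eqFm (w : V4) (B : Fm) : fvars (eqFm w B) ⊆ fvars B := by
  cases w <;> simp [eqFm, fvars]

/-- characteristic formula of an assignment `c` -/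
def chiFm {k : ℕ} (c : Fin k → V4) : Fm :=
  conjList (List.ofFn fun i : Fin k => eqFm (c i) (.var i))

lemma fvars_chiFm {k : ℕ} (c : Fin k → V4) : fvars (chiFm c) ⊆ {m : ℕ | m < k} := by
  apply fvars_conjList
  intro B hB
  obtain ⟨i, rfl⟩ := List.mem_ofFn.1 hB
  refine (fvars_eqFm _ _).trans ?_
  simp [fvars, i.isLt]

lemma val_chiFm {k : ℕ} (v : ℕ → V4) (c : Fin k → V4) :
    val v (chiFm c) = if ∀ i : Fin k, v i = c i then V4.t else V4.f := by
  rw [chiFm, val_conjList]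
  · congr 1
    · simp only [eq_iff_iff]
      constructor
      · intro h i
        have := h _ (List.mem_ofFn.2 ⟨i, rfl⟩)
        rw [val_eqFm] at this
        simp only [val] at this
        by_contra hne
        replace this : V4.f = V4.t := (if_neg hne).symm.trans this
        exact absurd this (by decide)
      · intro h B hB
        obtain ⟨i, rfl⟩ := List.mem_ofFn.1 hB
        rw [val_eqFm]
        simp [val, h i]
  · intro B hB
    obtain ⟨i, rfl⟩ := List.mem_ofFn.1 hB
    rw [val_eqFm]
    split <;> simp

/-- witness formula producing the value `gc` when the variables take values `c` -/
noncomputable def Wfm {k : ℕ} (gc : V4) (c : Fin k → V4) : Fm :=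
  match gc with
  | .t => .imp .bot .bot
  | .f => .bot
  | .b => if h : ∃ i, c i = V4.b then .and (.var h.choose) (.neg (.var h.choose)) else .bot
  | .n => if h : ∃ i, c i = V4.n then .and (.var h.choose) (.neg (.var h.choose)) else .bot

lemma fvars_Wfm {k : ℕ} (gc : V4) (c : Fin k → V4) : fvars (Wfm gc c) ⊆ {m : ℕ | m < k} := by
  cases gc <;> simp only [Wfm] <;> try simp [fvars]
  all_goals
    split
    · next h => simp [fvars, (h.choose : Fin k).isLt]
    · simp [fvars]

lemma val_Wfm {k : ℕ} (gc : V4) (c : Fin k → V4) (v : ℕ → V4)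
    (hv : ∀ i : Fin k, v i = c i)
    (hb : gc = V4.b → ∃ i, c i = V4.b) (hn : gc = V4.n → ∃ i, c i = V4.n) :
    val v (Wfm gc c) = gc := by
  cases gc with
  | t => rfl
  | f => rfl
  | b =>
    have h := hb rfl
    simp only [Wfm, dif_pos h, val]
    rw [hv, h.choose_spec]
    decide
  | n =>
    have h := hn rfl
    simp only [Wfm, dif_pos h, val]
    rw [hv, h.choose_spec]
    decide

/-- main construction: any function preserving the needed property is definable -/
lemma construct {k : ℕ} (g : (Fin k → V4) → V4)
    (hb : ∀ c, g c = V4.b → ∃ i, c i = V4.b)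
    (hn : ∀ c, g c = V4.n → ∃ i, c i = V4.n) :
    ∃ A : Fm, fvars A ⊆ {m : ℕ | m < k} ∧ ∀ v : ℕ → V4, val v A = g (fun i => v i) := by
  refine ⟨disjList ((Finset.univ : Finset (Fin k → V4)).toList.map
      (fun c => .and (chiFm c) (Wfm (g c) c))), ?_, ?_⟩
  · apply fvars_disjList
    intro B hB
    rw [List.mem_map] at hB
    obtain ⟨c, -, rfl⟩ := hB
    simp only [fvars, Set.union_subset_iff]
    exact ⟨fvars_chiFm c, fvars_Wfm _ c⟩
  · intro v
    apply val_disjList v (g (fun i => v i))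
    · intro C hC
      rw [List.mem_map] at hC
      obtain ⟨c, -, rfl⟩ := hC
      simp only [val, val_chiFm]
      by_cases hc : ∀ i : Fin k, v i = c i
      · right
        rw [if_pos hc]
        have hca : (fun i : Fin k => v i) = c := by funext i; exact hc i
        rw [hca, val_Wfm (g c) c v hc (hb c) (hn c), and4_t]
      · left
        rw [if_neg hc, and4_f]
    · refine ⟨_, List.mem_map.2 ⟨(fun i : Fin k => v i), by simp, rfl⟩, ?_⟩
      simp only [val, val_chiFm]
      have hc : ∀ i : Fin k, v i = (fun i : Fin k => v i) i := fun i => rfl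
      rw [if_pos (fun _ : Fin k => trivial), val_Wfm _ _ v hc (hb _) (hn _), and4_t]

end Aux

/-- a function on the Belnap-Dunn truth values is a matrix
function of `M^{BD,→,⊥}` iff it maps `{t, f, b}ⁿ` into `{t, f, b}` and
`{t, f, n}ⁿ` into `{t, f, n}`; equivalently, an `n`-ary connective ◊ with
intended interpretation `g` is definable in BD^{→,⊥,◊} (by a formula over
¬, ∧, ∨, →, ⊥) iff `g` preserves both `{t, f, b}` and `{t, f, n}`. -/


theorem stmt12 :
    (∀ (k : ℕ) (g : (Fin k → V4) → V4),
        IsMF g ↔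
          ((∀ a : Fin k → V4,
              (∀ i, a i ∈ ({V4.t, V4.f, V4.b} : Set V4)) →
              g a ∈ ({V4.t, V4.f, V4.b} : Set V4)) ∧
           (∀ a : Fin k → V4,
              (∀ i, a i ∈ ({V4.t, V4.f, V4.n} : Set V4)) →
              g a ∈ ({V4.t, V4.f, V4.n} : Set V4)))) ∧
    (∀ (k : ℕ) (g : (Fin k → V4) → V4),
        (∃ A : Fm, fvars A ⊆ {m : ℕ | m < k} ∧
            ∀ v : ℕ → V4, val v A = g (fun i => v i)) ↔
          ((∀ a : Fin k → V4,
              (∀ i, a i ∈ ({V4.t, V4.f, V4.b} : Set V4)) →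
              g a ∈ ({V4.t, V4.f, V4.b} : Set V4)) ∧
           (∀ a : Fin k → V4,
              (∀ i, a i ∈ ({V4.t, V4.f, V4.n} : Set V4)) →
              g a ∈ ({V4.t, V4.f, V4.n} : Set V4)))) := by
  have pres : ∀ (k : ℕ) (g : (Fin k → V4) → V4), IsMF g →
      ((∀ a : Fin k → V4,
          (∀ i, a i ∈ ({V4.t, V4.f, V4.b} : Set V4)) →
          g a ∈ ({V4.t, V4.f, V4.b} : Set V4)) ∧
       (∀ a : Fin k → V4,
          (∀ i, a i ∈ ({V4.t, V4.f, V4.n} : Set V4)) →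
          g a ∈ ({V4.t, V4.f, V4.n} : Set V4))) := by
    intro k g h
    constructor
    · exact isMF_closed h _ (by simp)
        (by intro x hx
            simp only [Set.mem_insert_iff, Set.mem_singleton_iff] at hx ⊢
            revert x; decide)
        (by intro x hx y hy
            simp only [Set.mem_insert_iff, Set.mem_singleton_iff] at hx hy ⊢
            revert x y; decide)
        (by intro x hx y hy
            simp only [Set.mem_insert_iff, Set.mem_singleton_iff] at hx hy ⊢
            revert x y; decide)
        (by intro x hx y hy
            simp only [Set.mem_insert_iff, Set.mem_singleton_iff] at hx hy ⊢
            revert x y; decide)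
    · exact isMF_closed h _ (by simp)
        (by intro x hx
            simp only [Set.mem_insert_iff, Set.mem_singleton_iff] at hx ⊢
            revert x; decide)
        (by intro x hx y hy
            simp only [Set.mem_insert_iff, Set.mem_singleton_iff] at hx hy ⊢
            revert x y; decide)
        (by intro x hx y hy
            simp only [Set.mem_insert_iff, Set.mem_singleton_iff] at hx hy ⊢
            revert x y; decide)
        (by intro x hx y hy
            simp only [Set.mem_insert_iff, Set.mem_singleton_iff] at hx hy ⊢
            revert x y; decide)
  have con : ∀ (k : ℕ) (g : (Fin k → V4) → V4),
      ((∀ a : Fin k → V4,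
          (∀ i, a i ∈ ({V4.t, V4.f, V4.b} : Set V4)) →
          g a ∈ ({V4.t, V4.f, V4.b} : Set V4)) ∧
       (∀ a : Fin k → V4,
          (∀ i, a i ∈ ({V4.t, V4.f, V4.n} : Set V4)) →
          g a ∈ ({V4.t, V4.f, V4.n} : Set V4))) →
      ∃ A : Fm, fvars A ⊆ {m : ℕ | m < k} ∧
        ∀ v : ℕ → V4, val v A = g (fun i => v i) := by
    rintro k g ⟨h1, h2⟩
    apply construct
    · intro c hc
      by_contra hno
      push_neg at hno
      have hmem : ∀ i, c i ∈ ({V4.t, V4.f, V4.n} : Set V4) := by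
        intro i
        have h' := hno i
        simp only [Set.mem_insert_iff, Set.mem_singleton_iff]
        cases hci : c i
        · left; rfl
        · right; left; rfl
        · exact absurd hci h'
        · right; right; rfl
      have := h2 c hmem
      simp only [Set.mem_insert_iff, Set.mem_singleton_iff, hc] at this
      exact absurd this (by decide)
    · intro c hc
      by_contra hno
      push_neg at hno
      have hmem : ∀ i, c i ∈ ({V4.t, V4.f, V4.b} : Set V4) := by
        intro i
        have h' := hno i
        simp only [Set.mem_insert_iff, Set.mem_singleton_iff]
        cases hci : c i
        · left; rfl
        · right; left; rfl
        · right; right; rfl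
        · exact absurd hci h'
      have := h1 c hmem
      simp only [Set.mem_insert_iff, Set.mem_singleton_iff, hc] at this
      exact absurd this (by decide)
  exact ⟨fun k g => ⟨fun h => pres k g h, fun h => isMF_of_def (con k g h)⟩,
         fun k g => ⟨fun h => pres k g (isMF_of_def h), fun h => con k g h⟩⟩

end BD12
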